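/- β-soundness implies subject reduction: if 𝒯 is a β-sound intersection type theory, M →_β M', and Γ ⊢ M : A, then Γ ⊢ M' : A. -/

import Mathlib

/-- Pure λ-terms with variables named by natural numbers. -/
inductive Tm : Type
  | var : ℕ → Tm
  | lam : ℕ → Tm → Tm
  | app : Tm → Tm → Tm
deriving DecidableEq

namespace Tm

/-- Free variables of a term. -/
def fv : Tm → Finset ℕ
  | var x => {x}
  | lam x t => fv t \ {x}
  | app t u => fv t ∪ fv u

/-- A variable fresh for a given finite set of variables. -/
def fresh (s : Finset ℕ) : ℕ := (s.sup id) + 1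

/-- Capture-avoiding simultaneous substitution. -/
def subst (σ : ℕ → Tm) : Tm → Tm
  | var x => σ x
  | app t u => app (subst σ t) (subst σ u)
  | lam x t =>
      let y := fresh ((fv t \ {x}).biUnion fun z => fv (σ z))
      lam y (subst (fun z => if z = x then var y else σ z) t)

/-- `M[x := N]`. -/
def subst1 (x : ℕ) (N M : Tm) : Tm :=
  subst (fun z => if z = x then N else var z) M

/-- `λx₁…xₙ. t`. -/
def lams (xs : List ℕ) (t : Tm) : Tm := xs.foldr lam t

/-- `t M₁ ⋯ Mₘ`. -/
def apps (t : Tm) (ts : List Tm) : Tm := ts.foldl app t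

/-- One-step β-reduction: contextual closure of the β-rule. -/
inductive Step : Tm → Tm → Prop
  | beta (x : ℕ) (M N : Tm) : Step (app (lam x M) N) (subst1 x N M)
  | appL {M M' : Tm} (N : Tm) : Step M M' → Step (app M N) (app M' N)
  | appR (M : Tm) {N N' : Tm} : Step N N' → Step (app M N) (app M N')
  | abs (x : ℕ) {M M' : Tm} : Step M M' → Step (lam x M) (lam x M')

/-- β-reduction: reflexive-transitive closure of one-step β-reduction. -/
def Red : Tm → Tm → Prop := Relation.ReflTransGen Step

/-- β-convertibility: the equivalence relation generated by β-reduction. -/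
def Conv : Tm → Tm → Prop := Relation.EqvGen Step

/-- `M` is solvable if `(λx⃗.M) N₁ ⋯ Nₙ` β-reduces to the identity,
where `x⃗` covers the free variables of `M`. -/
def Solvable (M : Tm) : Prop :=
  ∃ (xs : List ℕ) (Ns : List Tm) (y : ℕ),
    M.fv ⊆ xs.toFinset ∧ Red (apps (lams xs M) Ns) (lam y (var y))

/-- One-step head reduction: contraction of the head redex. -/
inductive HeadStep : Tm → Tm → Prop
  | beta (x : ℕ) (M N : Tm) (Ms : List Tm) :
      HeadStep (apps (app (lam x M) N) Ms) (apps (subst1 x N M) Ms)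
  | abs (x : ℕ) {M M' : Tm} : HeadStep M M' → HeadStep (lam x M) (lam x M')

end Tm

/-- Intersection types over a set `A` of constants, with top `𝖴`. -/
inductive Ty (A : Type) : Type
  | const : A → Ty A
  | top : Ty A
  | arrow : Ty A → Ty A → Ty A
  | inter : Ty A → Ty A → Ty A
deriving DecidableEq

/-- An intersection type theory: a subtyping relation on `Ty A` closed under
(Refl), (IncL), (IncR), (𝖴top), (Glb), (Trans) and (→∼). -/
structure ITT (A : Type) where
  le : Ty A → Ty A → Prop
  le_refl : ∀ a, le a a
  le_incL : ∀ a b, le (Ty.inter b a) b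
  le_incR : ∀ a b, le (Ty.inter b a) a
  le_top : ∀ a, le a Ty.top
  le_glb : ∀ {a b c}, le c a → le c b → le c (Ty.inter a b)
  le_trans : ∀ {a b c}, le a b → le b c → le a c
  arrow_cong : ∀ {a a' b b'}, le a a' → le a' a → le b b' → le b' b →
      le (Ty.arrow a b) (Ty.arrow a' b')

variable {A : Type}

/-- The equivalence `∼` induced by the subtyping. -/
def ITT.eqv (T : ITT A) (a b : Ty A) : Prop := T.le a b ∧ T.le b a

/-- Bases: (partial) mappings from term variables to types. -/
def Ctx (A : Type) := ℕ → Option (Ty A)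

def Ctx.empty : Ctx A := fun _ => none

/-- `Γ, x:a`. -/
def Ctx.update (Γ : Ctx A) (x : ℕ) (a : Ty A) : Ctx A :=
  fun y => if y = x then some a else Γ y

/-- The intersection type assignment system induced by an itt `T`:
rules (Ax), (𝖴), (→I), (→E), (∩I) and (≤). -/
inductive Der (T : ITT A) : Ctx A → Tm → Ty A → Prop
  | ax {Γ : Ctx A} {x a} : Γ x = some a → Der T Γ (Tm.var x) a
  | top {Γ M} : Der T Γ M Ty.top
  | arrI {Γ : Ctx A} {x M a b} :
      Der T (Γ.update x b) M a → Der T Γ (Tm.lam x M) (Ty.arrow b a)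
  | arrE {Γ M N a b} :
      Der T Γ M (Ty.arrow b a) → Der T Γ N b → Der T Γ (Tm.app M N) a
  | interI {Γ M a b} : Der T Γ M a → Der T Γ M b → Der T Γ M (Ty.inter a b)
  | sub {Γ M a b} : Der T Γ M a → T.le a b → Der T Γ M b

/-- Finite intersection `⋂_{i∈I} Aᵢ`, with `⋂_∅ = 𝖴`. -/
def interList : List (Ty A) → Ty A
  | [] => Ty.top
  | a :: l => Ty.inter a (interList l)

/-- β-soundness of an itt: whenever `A ≁ 𝖴` and `⋂ᵢ(Bᵢ → Aᵢ) ≤ B → A`, there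
is a subfamily `J ⊆ I` with `B ≤ ⋂_{j∈J} Bⱼ` and `⋂_{j∈J} Aⱼ ≤ A`. -/
def BetaSound {A : Type} (T : ITT A) : Prop :=
  ∀ (l : List (Ty A × Ty A)) (b a : Ty A), ¬ T.eqv a Ty.top →
    T.le (interList (l.map fun p => Ty.arrow p.1 p.2)) (Ty.arrow b a) →
    ∃ l' : List (Ty A × Ty A), l'.Sublist l ∧
      T.le b (interList (l'.map Prod.fst)) ∧
      T.le (interList (l'.map Prod.snd)) a


section Aux
variable {A : Type} {T : ITT A}

lemma fresh_not_mem (s : Finset ℕ) : Tm.fresh s ∉ s := by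
  intro hmem
  have h1 : id (Tm.fresh s) ≤ s.sup id := Finset.le_sup (f := id) hmem
  simp only [Tm.fresh, id] at h1
  omega

lemma interList_le_mem {l : List (Ty A)} {c : Ty A} (hc : c ∈ l) :
    T.le (interList l) c := by
  induction l with
  | nil => cases hc
  | cons d l ih =>
    rcases List.mem_cons.mp hc with h | h
    · subst h; exact T.le_incL _ _
    · exact T.le_trans (T.le_incR _ _) (ih h)

lemma der_interList {Γ : Ctx A} {M : Tm} {l : List (Ty A)}
    (h : ∀ c ∈ l, Der T Γ M c) : Der T Γ M (interList l) := by
  induction l with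
  | nil => exact Der.top
  | cons d l ih =>
    exact Der.interI (h d List.mem_cons_self)
      (ih fun c hc => h c (List.mem_cons_of_mem _ hc))

lemma interList_append_le_left (s t : List (Ty A)) :
    T.le (interList (s ++ t)) (interList s) := by
  induction s with
  | nil => exact T.le_top _
  | cons d s ih =>
    exact T.le_glb (T.le_incL _ _) (T.le_trans (T.le_incR _ _) ih)

lemma interList_append_le_right (s t : List (Ty A)) :
    T.le (interList (s ++ t)) (interList t) := by
  induction s with
  | nil => exact T.le_refl _
  | cons d s ih => exact T.le_trans (T.le_incR _ _) ih

lemma der_mono {Γ : Ctx A} {M : Tm} {a : Ty A} (h : Der T Γ M a) :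
    ∀ Γ' : Ctx A, (∀ y ∈ M.fv, ∀ c, Γ y = some c →
      ∃ c', Γ' y = some c' ∧ T.le c' c) → Der T Γ' M a := by
  induction h with
  | ax hx =>
    intro Γ' hΓ
    obtain ⟨c', hc', hle⟩ := hΓ _ (by simp [Tm.fv]) _ hx
    exact Der.sub (Der.ax hc') hle
  | top => intro Γ' _; exact Der.top
  | @arrI Γ x M a b h ih =>
    intro Γ' hΓ
    refine Der.arrI (ih _ ?_)
    intro y hy c hc
    by_cases hyx : y = x
    · subst hyx
      refine ⟨c, ?_, T.le_refl _⟩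
      simp only [Ctx.update, if_pos rfl] at hc ⊢
      exact hc
    · simp only [Ctx.update, if_neg hyx] at hc ⊢
      exact hΓ y (by simp [Tm.fv, hy, hyx]) c hc
  | arrE hM hN ihM ihN =>
    intro Γ' hΓ
    exact Der.arrE
      (ihM _ fun y hy => hΓ y (by simp [Tm.fv, hy]))
      (ihN _ fun y hy => hΓ y (by simp [Tm.fv, hy]))
  | interI h1 h2 ih1 ih2 =>
    intro Γ' hΓ
    exact Der.interI (ih1 _ hΓ) (ih2 _ hΓ)
  | sub h hle ih =>
    intro Γ' hΓ
    exact Der.sub (ih _ hΓ) hle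

lemma der_subst {Γ' : Ctx A} {M : Tm} {a : Ty A} (h : Der T Γ' M a) :
    ∀ (Γ : Ctx A) (σ : ℕ → Tm),
      (∀ z ∈ M.fv, ∀ c, Γ' z = some c → Der T Γ (σ z) c) →
      Der T Γ (Tm.subst σ M) a := by
  induction h with
  | ax hx =>
    intro Γ σ hσ
    exact hσ _ (by simp [Tm.fv]) _ hx
  | top => intro Γ σ _; exact Der.top
  | @arrI Γ'' x M a b h ih =>
    intro Γ σ hσ
    simp only [Tm.subst]
    set S := ((M.fv \ {x}).biUnion fun z => (σ z).fv) with hS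
    set y := Tm.fresh S with hy
    refine Der.arrI (ih _ _ ?_)
    intro z hz c hc
    by_cases hzx : z = x
    · subst hzx
      simp only [Ctx.update, if_pos rfl] at hc
      cases hc
      simp only [if_pos rfl]
      exact Der.ax (by simp [Ctx.update])
    · simp only [Ctx.update, if_neg hzx] at hc
      simp only [if_neg hzx]
      have hder : Der T Γ (σ z) c := hσ z (by simp [Tm.fv, hz, hzx]) c hc
      refine der_mono hder _ ?_
      intro w hw c' hc'
      have hwS : w ∈ S := by
        rw [hS]
        exact Finset.mem_biUnion.mpr ⟨z, by simp [hz, hzx], hw⟩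
      have hwy : w ≠ y := by
        intro hwy; subst hwy; exact fresh_not_mem S hwS
      exact ⟨c', by simp [Ctx.update, hwy, hc'], T.le_refl _⟩
  | arrE hM hN ihM ihN =>
    intro Γ σ hσ
    exact Der.arrE
      (ihM _ _ fun z hz => hσ z (by simp [Tm.fv, hz]))
      (ihN _ _ fun z hz => hσ z (by simp [Tm.fv, hz]))
  | interI h1 h2 ih1 ih2 =>
    intro Γ σ hσ
    exact Der.interI (ih1 _ _ hσ) (ih2 _ _ hσ)
  | sub h hle ih =>
    intro Γ σ hσ
    exact Der.sub (ih _ _ hσ) hle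

lemma der_subst1 {Γ : Ctx A} {x : ℕ} {M N : Tm} {a b : Ty A}
    (hM : Der T (Γ.update x b) M a) (hN : Der T Γ N b) :
    Der T Γ (Tm.subst1 x N M) a := by
  refine der_subst hM Γ _ ?_
  intro z _ c hc
  by_cases hzx : z = x
  · subst hzx
    simp only [Ctx.update, if_pos rfl] at hc
    cases hc
    simp only [if_pos rfl]
    exact hN
  · simp only [Ctx.update, if_neg hzx] at hc
    simp only [if_neg hzx]
    exact Der.ax hc

lemma appGen {Γ : Ctx A} {P : Tm} {a : Ty A} (h : Der T Γ P a) :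
    ∀ M N, P = Tm.app M N → ∃ l : List (Ty A × Ty A),
      (∀ p ∈ l, Der T Γ M (Ty.arrow p.1 p.2) ∧ Der T Γ N p.1) ∧
      T.le (interList (l.map Prod.snd)) a := by
  induction h with
  | ax _ => intro M N hP; cases hP
  | top =>
    intro M N hP
    exact ⟨[], by simp, T.le_refl _⟩
  | arrI _ _ => intro M N hP; cases hP
  | @arrE Γ M N a b hM hN _ _ =>
    intro M' N' hP
    cases hP
    refine ⟨[(b, a)], ?_, T.le_incL _ _⟩
    rintro p hp
    simp only [List.mem_singleton] at hp
    subst hp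
    exact ⟨hM, hN⟩
  | interI h1 h2 ih1 ih2 =>
    intro M N hP
    obtain ⟨l1, hl1, hle1⟩ := ih1 M N hP
    obtain ⟨l2, hl2, hle2⟩ := ih2 M N hP
    refine ⟨l1 ++ l2, ?_, ?_⟩
    · intro p hp
      rcases List.mem_append.mp hp with h | h
      · exact hl1 p h
      · exact hl2 p h
    · rw [List.map_append]
      exact T.le_glb (T.le_trans (interList_append_le_left _ _) hle1)
        (T.le_trans (interList_append_le_right _ _) hle2)
  | sub _ hle ih =>
    intro M N hP
    obtain ⟨l, hl, hle'⟩ := ih M N hP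
    exact ⟨l, hl, T.le_trans hle' hle⟩

lemma lamGen {Γ : Ctx A} {P : Tm} {a : Ty A} (h : Der T Γ P a) :
    ∀ x M, P = Tm.lam x M → ∃ l : List (Ty A × Ty A),
      (∀ p ∈ l, Der T (Γ.update x p.1) M p.2) ∧
      T.le (interList (l.map fun p => Ty.arrow p.1 p.2)) a := by
  induction h with
  | ax _ => intro x M hP; cases hP
  | top =>
    intro x M hP
    exact ⟨[], by simp, T.le_refl _⟩
  | @arrI Γ x M a b h _ =>
    intro x' M' hP
    cases hP
    refine ⟨[(b, a)], ?_, T.le_incL _ _⟩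
    rintro p hp
    simp only [List.mem_singleton] at hp
    subst hp
    exact h
  | arrE _ _ _ _ => intro x M hP; cases hP
  | interI h1 h2 ih1 ih2 =>
    intro x M hP
    obtain ⟨l1, hl1, hle1⟩ := ih1 x M hP
    obtain ⟨l2, hl2, hle2⟩ := ih2 x M hP
    refine ⟨l1 ++ l2, ?_, ?_⟩
    · intro p hp
      rcases List.mem_append.mp hp with h | h
      · exact hl1 p h
      · exact hl2 p h
    · rw [List.map_append]
      exact T.le_glb (T.le_trans (interList_append_le_left _ _) hle1)
        (T.le_trans (interList_append_le_right _ _) hle2)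
  | sub _ hle ih =>
    intro x M hP
    obtain ⟨l, hl, hle'⟩ := ih x M hP
    exact ⟨l, hl, T.le_trans hle' hle⟩

/-- The key redex case. -/
lemma beta_case (hT : BetaSound T) {Γ : Ctx A} {x : ℕ} {M N : Tm} {a : Ty A}
    (h : Der T Γ (Tm.app (Tm.lam x M) N) a) :
    Der T Γ (Tm.subst1 x N M) a := by
  obtain ⟨l, hl, hle⟩ := appGen h _ _ rfl
  refine Der.sub (der_interList ?_) hle
  intro c hc
  rw [List.mem_map] at hc
  obtain ⟨p, hp, rfl⟩ := hc
  obtain ⟨hlam, hN⟩ := hl p hp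
  by_cases htop : T.eqv p.2 Ty.top
  · exact Der.sub Der.top htop.2
  · obtain ⟨l2, hl2, hle2⟩ := lamGen hlam x M rfl
    obtain ⟨l2', hsub, hB, hA⟩ := hT l2 p.1 p.2 htop hle2
    set B := interList (l2'.map Prod.fst) with hBdef
    have hNB : Der T Γ N B := Der.sub hN hB
    have hMB : Der T (Γ.update x B) M (interList (l2'.map Prod.snd)) := by
      refine der_interList ?_
      intro c hc
      rw [List.mem_map] at hc
      obtain ⟨q, hq, rfl⟩ := hc
      have hqmem : q ∈ l2 := hsub.mem hq
      refine der_mono (hl2 q hqmem) _ ?_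
      intro y _ c' hc'
      by_cases hyx : y = x
      · subst hyx
        simp only [Ctx.update, if_pos rfl] at hc' ⊢
        cases hc'
        exact ⟨B, rfl, interList_le_mem (List.mem_map.mpr ⟨q, hq, rfl⟩)⟩
      · simp only [Ctx.update, if_neg hyx] at hc' ⊢
        exact ⟨c', hc', T.le_refl _⟩
    exact der_subst1 (Der.sub hMB hA) hNB

end Aux

/-- β-soundness implies subject reduction. -/
theorem betaSound_subject_reduction {A : Type} (T : ITT A)
    (hT : BetaSound T) (Γ : Ctx A) (M M' : Tm) (a : Ty A)
    (hstep : Tm.Step M M') (h : Der T Γ M a) :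
    Der T Γ M' a := by
  induction hstep generalizing Γ a with
  | beta x M N => exact beta_case hT h
  | appL N hs ih =>
    obtain ⟨l, hl, hle⟩ := appGen h _ _ rfl
    refine Der.sub (der_interList ?_) hle
    intro c hc
    rw [List.mem_map] at hc
    obtain ⟨p, hp, rfl⟩ := hc
    obtain ⟨hM, hN⟩ := hl p hp
    exact Der.arrE (ih _ _ hM) hN
  | appR M hs ih =>
    obtain ⟨l, hl, hle⟩ := appGen h _ _ rfl
    refine Der.sub (der_interList ?_) hle
    intro c hc
    rw [List.mem_map] at hc
    obtain ⟨p, hp, rfl⟩ := hc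
    obtain ⟨hM, hN⟩ := hl p hp
    exact Der.arrE hM (ih _ _ hN)
  | abs x hs ih =>
    obtain ⟨l, hl, hle⟩ := lamGen h _ _ rfl
    have : Der T Γ _ (interList (l.map fun p => Ty.arrow p.1 p.2)) :=
      der_interList (by
        intro c hc
        rw [List.mem_map] at hc
        obtain ⟨p, hp, rfl⟩ := hc
        exact Der.arrI (ih _ _ (hl p hp)))
    exact Der.sub this hle
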